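/- Let m ∈ ℕ and α > 0. There exists a constant c > 0 such that for all n ∈ ℕ: I_{H(n)}(α,(0,1/n)^m) ≥ c · n^{2m(m−1)α² − m(1 − α² ± α)}, where H(n) ranges over {SO(2n), SO⁻(2n), SO(2n+1), SO⁻(2n+1), Sp(2n)}, with the sign − if H(n) = Sp(2n) and the sign + otherwise. In particular, I_{H(n)}(α,(0,π)^m) ≥ c · n^{2m(m−1)α² − m(1 − α² ± α)} for all n. -/

import Mathlib

set_option maxHeartbeats 1000000

/-!
The integrals `I_{H(n)}(α, R)` appearing in Claeys–Forkel–Keating,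
"Moments of moments of the characteristic polynomials of random orthogonal
and symplectic matrices".
-/

open MeasureTheory Real

noncomputable section

/-- The box `(a,b)^m`, as a subset of `Fin m → ℝ`. -/
def cube (m : ℕ) (a b : ℝ) : Set (Fin m → ℝ) := Set.univ.pi fun _ => Set.Ioo a b

/-- `F_n(θ₁,…,θ_m) = ∏_{1≤j<k≤m} (2 sin|(θ_j−θ_k)/2| + 1/n)^{−2α²} (2 sin|(θ_j+θ_k)/2| + 1/n)^{−2α²}`. -/
def Fn (m n : ℕ) (α : ℝ) (θ : Fin m → ℝ) : ℝ :=
  ∏ j : Fin m, ∏ k ∈ Finset.Ioi j,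
    ((2 * Real.sin (|θ j - θ k| / 2) + 1 / n) ^ (-(2 * α ^ 2)) *
      (2 * Real.sin (|θ j + θ k| / 2) + 1 / n) ^ (-(2 * α ^ 2)))

/-- `I_{SO(2n)}(α, R)`. -/
def ISOeven (m n : ℕ) (α : ℝ) (R : Set (Fin m → ℝ)) : ℝ :=
  (1 / π) ^ m * ∫ θ in R, Fn m n α θ *
    ∏ j : Fin m, (2 * Real.sin (θ j) + 1 / n) ^ (-α ^ 2 + α)

/-- `I_{SO⁻(2n)}(α, R)`. -/
def ISOminusEven (m n : ℕ) (α : ℝ) (R : Set (Fin m → ℝ)) : ℝ :=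
  (1 / π) ^ m * ∫ θ in R, Fn m n α θ *
    ∏ j : Fin m, ((2 * Real.sin (θ j) + 1 / n) ^ (-α ^ 2 - α) * (2 * Real.sin (θ j)) ^ (2 * α))

/-- `I_{SO(2n+1)}(α, R)`. -/
def ISOodd (m n : ℕ) (α : ℝ) (R : Set (Fin m → ℝ)) : ℝ :=
  (1 / π) ^ m * ∫ θ in R, Fn m n α θ *
    ∏ j : Fin m, ((2 * Real.sin (θ j / 2) + 1 / n) ^ (-α ^ 2 - α) *
      (2 * Real.cos (θ j / 2) + 1 / n) ^ (-α ^ 2 + α) * (2 * Real.sin (θ j / 2)) ^ (2 * α))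

/-- `I_{SO⁻(2n+1)}(α, R)`. -/
def ISOminusOdd (m n : ℕ) (α : ℝ) (R : Set (Fin m → ℝ)) : ℝ :=
  (1 / π) ^ m * ∫ θ in R, Fn m n α θ *
    ∏ j : Fin m, ((2 * Real.sin (θ j / 2) + 1 / n) ^ (-α ^ 2 + α) *
      (2 * Real.cos (θ j / 2) + 1 / n) ^ (-α ^ 2 - α) * (2 * Real.cos (θ j / 2)) ^ (2 * α))

/-- `I_{Sp(2n)}(α, R)`. -/
def ISp (m n : ℕ) (α : ℝ) (R : Set (Fin m → ℝ)) : ℝ :=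
  (1 / π) ^ m * ∫ θ in R, Fn m n α θ *
    ∏ j : Fin m, (2 * Real.sin (θ j) + 1 / n) ^ (-α ^ 2 - α)

end

section CFKhelpers

private lemma CFK_two_mul_sum_card (m : ℕ) :
    2 * ∑ j : Fin m, (Finset.Ioi j).card = m * (m - 1) := by
  simp only [Fin.card_Ioi]
  rw [Fin.sum_univ_eq_sum_range (fun j => m - 1 - j) m,
    Finset.sum_range_reflect (fun i => i) m, mul_comm]
  exact Finset.sum_range_id_mul_two m

private lemma CFK_one_div_rpow {n : ℝ} (hn : 0 < n) (p : ℝ) : (1/n) ^ p = n ^ (-p) := by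
  rw [one_div, Real.inv_rpow hn.le, ← Real.rpow_neg hn.le]

private lemma CFK_half_le_sin {x : ℝ} (h0 : 0 ≤ x) (h1 : x ≤ 1) : x / 2 ≤ Real.sin x := by
  rcases eq_or_lt_of_le h0 with rfl | h0'
  · simp
  · nlinarith [Real.sin_gt_sub_cube h0', sq_nonneg x, sq_nonneg (1 - x)]

private lemma CFK_rpow_min_le {a b x p : ℝ} (ha : 0 < a) (hax : a ≤ x) (hxb : x ≤ b) :
    min (a ^ p) (b ^ p) ≤ x ^ p := by
  rcases le_or_gt p 0 with hp | hp
  · exact (min_le_right _ _).trans (Real.rpow_le_rpow_of_nonpos (ha.trans_le hax) hxb hp)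
  · exact (min_le_left _ _).trans (Real.rpow_le_rpow ha.le hax hp.le)

private lemma CFK_factor_low {n x p : ℝ} (hn : 0 < n) (h1 : 1/n ≤ x) (h3 : x ≤ 3/n) :
    min 1 ((3:ℝ) ^ p) * n ^ (-p) ≤ x ^ p := by
  have hmin : min ((1/n) ^ p) ((3/n) ^ p) ≤ x ^ p := by
    rcases le_or_gt p 0 with hp | hp
    · exact (min_le_right _ _).trans
        (Real.rpow_le_rpow_of_nonpos (lt_of_lt_of_le (by positivity) h1) h3 hp)
    · exact (min_le_left _ _).trans (Real.rpow_le_rpow (by positivity) h1 hp.le)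
  have e1 : ((1:ℝ)/n) ^ p = n ^ (-p) := CFK_one_div_rpow hn p
  have e3 : ((3:ℝ)/n) ^ p = 3 ^ p * n ^ (-p) := by
    rw [div_eq_mul_inv, Real.mul_rpow (by norm_num) (by positivity),
      Real.inv_rpow hn.le, ← Real.rpow_neg hn.le]
  calc min 1 ((3:ℝ)^p) * n ^ (-p) = min (1 * n^(-p)) (3^p * n^(-p)) :=
        min_mul_of_nonneg _ _ (by positivity)
    _ = min ((1/n)^p) ((3/n)^p) := by rw [one_mul, e1, e3]
    _ ≤ x ^ p := hmin

private lemma CFK_mul_low {c1 c2 p1 p2 g1 g2 n : ℝ} (hn : 0 < n) (h1pos : 0 < c1)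
    (h2pos : 0 < c2) (h1 : c1 * n ^ p1 ≤ g1) (h2 : c2 * n ^ p2 ≤ g2) :
    (c1 * c2) * n ^ (p1 + p2) ≤ g1 * g2 := by
  calc (c1*c2) * n^(p1+p2) = (c1 * n^p1) * (c2 * n^p2) := by rw [Real.rpow_add hn]; ring
  _ ≤ g1 * g2 := mul_le_mul h1 h2 (by positivity) (le_trans (by positivity) h1)

private lemma CFK_cube_subset {m : ℕ} {a b a' b' : ℝ} (h1 : a' ≤ a) (h2 : b ≤ b') :
    cube m a b ⊆ cube m a' b' :=
  Set.pi_mono fun _ _ => Set.Ioo_subset_Ioo h1 h2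

private lemma CFK_master {m : ℕ} (f : (Fin m → ℝ) → ℝ) {n : ℕ} (hn : 1 ≤ n) {A : ℝ}
    (hcont : ContinuousOn f (Set.univ.pi fun _ : Fin m => Set.Icc (0:ℝ) π))
    (hpos : ∀ θ ∈ cube m 0 π, 0 ≤ f θ)
    (hlow : ∀ θ ∈ cube m (1/(2*(n:ℝ))) (1/(n:ℝ)), A ≤ f θ) :
    A * (1/(2*(n:ℝ)))^m ≤ ∫ θ in cube m 0 (1/(n:ℝ)), f θ ∧
      A * (1/(2*(n:ℝ)))^m ≤ ∫ θ in cube m 0 π, f θ := by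
  have hn0 : (0:ℝ) < n := by exact_mod_cast Nat.pos_of_ne_zero (by omega)
  have hn1 : (1:ℝ) ≤ n := by exact_mod_cast hn
  have hπ : 1/(n:ℝ) ≤ π := by
    have : 1/(n:ℝ) ≤ 1 := by rw [div_le_one hn0]; exact hn1
    linarith [Real.pi_gt_three]
  have hsub1 : cube m (1/(2*(n:ℝ))) (1/(n:ℝ)) ⊆ cube m 0 (1/(n:ℝ)) :=
    CFK_cube_subset (by positivity) le_rfl
  have hsub2 : cube m 0 (1/(n:ℝ)) ⊆ cube m 0 π := CFK_cube_subset le_rfl hπ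
  have hsub3 : cube m 0 π ⊆ Set.univ.pi fun _ : Fin m => Set.Icc (0:ℝ) π :=
    Set.pi_mono fun _ _ => Set.Ioo_subset_Icc_self
  have hmeas : ∀ a b : ℝ, MeasurableSet (cube m a b) := fun a b =>
    MeasurableSet.univ_pi fun _ => measurableSet_Ioo
  have hK : IsCompact (Set.univ.pi fun _ : Fin m => Set.Icc (0:ℝ) π) :=
    isCompact_univ_pi fun _ => isCompact_Icc
  have hint : IntegrableOn f (cube m 0 π) :=
    (hcont.integrableOn_compact hK).mono_set hsub3
  have hint1 : IntegrableOn f (cube m 0 (1/(n:ℝ))) := hint.mono_set hsub2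
  have hintS : IntegrableOn f (cube m (1/(2*(n:ℝ))) (1/(n:ℝ))) := hint1.mono_set hsub1
  have hd : (1:ℝ)/n - 1/(2*n) = 1/(2*n) := by field_simp; ring
  have hvol : volume (cube m (1/(2*(n:ℝ))) (1/(n:ℝ))) = ENNReal.ofReal (1/(2*(n:ℝ))) ^ m := by
    rw [cube, volume_pi_pi]
    have hv1 : volume (Set.Ioo (1/(2*(n:ℝ))) (1/(n:ℝ))) = ENNReal.ofReal (1/(2*(n:ℝ))) := by
      rw [Real.volume_Ioo, hd]
    simp only [hv1, Finset.prod_const, Finset.card_univ, Fintype.card_fin]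
  have hfin : volume (cube m (1/(2*(n:ℝ))) (1/(n:ℝ))) ≠ ⊤ := by
    rw [hvol]; exact ENNReal.pow_ne_top ENNReal.ofReal_ne_top
  have h1 : A * (1/(2*(n:ℝ)))^m ≤ ∫ θ in cube m (1/(2*(n:ℝ))) (1/(n:ℝ)), f θ := by
    have h := MeasureTheory.setIntegral_ge_of_const_le (hmeas _ _) hfin hlow hintS
    calc A * (1/(2*(n:ℝ)))^m
        = A * (volume (cube m (1/(2*(n:ℝ))) (1/(n:ℝ)))).toReal := by
          rw [hvol, ENNReal.toReal_pow, ENNReal.toReal_ofReal (by positivity)]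
      _ = (volume.real (cube m (1/(2*(n:ℝ))) (1/(n:ℝ)))) • A := by
          simp only [smul_eq_mul, Measure.real]; ring
      _ ≤ _ := h
  have hmono1 : (∫ θ in cube m (1/(2*(n:ℝ))) (1/(n:ℝ)), f θ) ≤ ∫ θ in cube m 0 (1/(n:ℝ)), f θ :=
    MeasureTheory.setIntegral_mono_set hint1
      ((ae_restrict_iff' (hmeas _ _)).mpr (ae_of_all _ fun θ hθ => hpos θ (hsub2 hθ)))
      hsub1.eventuallyLE
  have hmono2 : (∫ θ in cube m 0 (1/(n:ℝ)), f θ) ≤ ∫ θ in cube m 0 π, f θ :=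
    MeasureTheory.setIntegral_mono_set hint
      ((ae_restrict_iff' (hmeas _ _)).mpr (ae_of_all _ fun θ hθ => hpos θ hθ))
      hsub2.eventuallyLE
  exact ⟨h1.trans hmono1, h1.trans (hmono1.trans hmono2)⟩

private lemma CFK_arith_eq {n : ℝ} (hn : 0 < n) (m M : ℕ) (K1 K2 p q : ℝ) :
    (1/π)^m * ((K1 * n^p) ^ M * (K2 * n^q) ^ m * (1/(2*n))^m)
    = ((1/π)^m * (K1 ^ M * K2 ^ m * (1/2:ℝ)^m)) * n ^ (p * M + q * m - m) := by
  have hnn : (0:ℝ) ≤ n := hn.le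
  rw [mul_pow, mul_pow, ← Real.rpow_natCast (n^p) M, ← Real.rpow_mul hnn,
    ← Real.rpow_natCast (n^q) m, ← Real.rpow_mul hnn,
    show (1:ℝ)/(2*n) = (1/2) * n⁻¹ by ring, mul_pow,
    ← Real.rpow_natCast n⁻¹ m, Real.inv_rpow hnn, ← Real.rpow_neg hnn,
    show p * (M:ℝ) + q * (m:ℝ) - (m:ℝ) = p * (M:ℝ) + (q * (m:ℝ) + -(m:ℝ)) by ring,
    Real.rpow_add hn, Real.rpow_add hn]
  ring

private lemma CFK_Fn_low {m n : ℕ} (hn : 1 ≤ n) (α : ℝ) (θ : Fin m → ℝ)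
    (hθ : ∀ j, θ j ∈ Set.Ioo (1/(2*(n:ℝ))) (1/(n:ℝ))) :
    (min 1 ((3:ℝ)^(-(2*α^2))) * (n:ℝ)^(2*α^2)) ^ (m*(m-1)) ≤ Fn m n α θ := by
  have hn0 : (0:ℝ) < n := by exact_mod_cast Nat.pos_of_ne_zero (by omega)
  set L : ℝ := min 1 ((3:ℝ)^(-(2*α^2))) * (n:ℝ)^(2*α^2) with hLdef
  have hL : 0 < L := mul_pos (lt_min one_pos (Real.rpow_pos_of_pos (by norm_num) _))
    (Real.rpow_pos_of_pos hn0 _)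
  have key : ∀ j k : Fin m, L * L ≤
      (2 * Real.sin (|θ j - θ k| / 2) + 1 / n) ^ (-(2 * α ^ 2)) *
      (2 * Real.sin (|θ j + θ k| / 2) + 1 / n) ^ (-(2 * α ^ 2)) := by
    intro j k
    obtain ⟨hj1, hj2⟩ := hθ j
    obtain ⟨hk1, hk2⟩ := hθ k
    have hlo : (0:ℝ) < 1/(2*(n:ℝ)) := by positivity
    have hd : 1/(n:ℝ) = 1/(2*n) + 1/(2*n) := by field_simp; ring
    have h2n : (2:ℝ)/n = 1/n + 1/n := by ring
    have h32 : (0:ℝ) ≤ 3/(2*(n:ℝ)) := by positivity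
    have hnpi : 1/(n:ℝ) ≤ 1 := by rw [div_le_one hn0]; exact_mod_cast hn
    have habs : |θ j - θ k| ≤ 1/(2*(n:ℝ)) := abs_sub_le_iff.mpr ⟨by linarith, by linarith⟩
    have habs0 : (0:ℝ) ≤ |θ j - θ k| := abs_nonneg _
    have hsum0 : (0:ℝ) ≤ θ j + θ k := by linarith
    have hsum : |θ j + θ k| ≤ 2/(n:ℝ) := by
      rw [abs_of_nonneg hsum0]; linarith
    have hb1lo : 1/(n:ℝ) ≤ 2 * Real.sin (|θ j - θ k| / 2) + 1 / n := by
      have : 0 ≤ Real.sin (|θ j - θ k| / 2) := Real.sin_nonneg_of_nonneg_of_le_pi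
        (by positivity) (by linarith [Real.pi_gt_three])
      linarith
    have hb1hi : 2 * Real.sin (|θ j - θ k| / 2) + 1 / n ≤ 3/(n:ℝ) := by
      have hs := Real.sin_le (by positivity : (0:ℝ) ≤ |θ j - θ k| / 2)
      have h3n : (3:ℝ)/n = 1/(2*(n:ℝ)) + 1/n + 3/(2*(n:ℝ)) := by field_simp; ring
      linarith
    have hb2lo : 1/(n:ℝ) ≤ 2 * Real.sin (|θ j + θ k| / 2) + 1 / n := by
      have : 0 ≤ Real.sin (|θ j + θ k| / 2) := Real.sin_nonneg_of_nonneg_of_le_pi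
        (by positivity) (by linarith [Real.pi_gt_three])
      linarith
    have hb2hi : 2 * Real.sin (|θ j + θ k| / 2) + 1 / n ≤ 3/(n:ℝ) := by
      have hs := Real.sin_le (by positivity : (0:ℝ) ≤ |θ j + θ k| / 2)
      have h3n' : (2:ℝ)/n + 1/n = 3/n := by ring
      linarith
    have h1 := CFK_factor_low hn0 hb1lo hb1hi (p := -(2*α^2))
    have h2 := CFK_factor_low hn0 hb2lo hb2hi (p := -(2*α^2))
    rw [neg_neg] at h1 h2
    exact mul_le_mul h1 h2 hL.le (le_trans hL.le h1)
  calc L ^ (m*(m-1)) = ∏ j : Fin m, ∏ _k ∈ Finset.Ioi j, (L * L) := by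
        rw [← sq]
        simp only [Finset.prod_const]
        rw [Finset.prod_pow_eq_pow_sum, ← pow_mul, ← CFK_two_mul_sum_card m]
    _ ≤ Fn m n α θ := by
        apply Finset.prod_le_prod
        · intro j _; exact Finset.prod_nonneg fun k _ => (by positivity)
        · intro j _
          apply Finset.prod_le_prod
          · intro k _; positivity
          · intro k _; exact key j k

private lemma CFK_Fn_nonneg {m n : ℕ} (α : ℝ) (θ : Fin m → ℝ)
    (hθ : ∀ j, θ j ∈ Set.Ioo 0 π) : 0 ≤ Fn m n α θ := by
  apply Finset.prod_nonneg; intro j _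
  apply Finset.prod_nonneg; intro k _
  obtain ⟨hj1, hj2⟩ := hθ j
  obtain ⟨hk1, hk2⟩ := hθ k
  have h1 : 0 ≤ Real.sin (|θ j - θ k| / 2) := by
    apply Real.sin_nonneg_of_nonneg_of_le_pi (by positivity)
    have : |θ j - θ k| ≤ π := abs_sub_le_iff.mpr ⟨by linarith, by linarith⟩
    linarith [Real.pi_pos]
  have h2 : 0 ≤ Real.sin (|θ j + θ k| / 2) := by
    apply Real.sin_nonneg_of_nonneg_of_le_pi (by positivity)
    rw [abs_of_nonneg (by linarith)]
    linarith
  have hn0 : (0:ℝ) ≤ 1/(n:ℝ) := by positivity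
  apply mul_nonneg <;> apply Real.rpow_nonneg <;> linarith

private lemma CFK_Fn_contOn (m n : ℕ) (α : ℝ) (hn : 1 ≤ n) :
    ContinuousOn (Fn m n α) (Set.univ.pi fun _ : Fin m => Set.Icc (0:ℝ) π) := by
  have hn0 : (0:ℝ) < n := by exact_mod_cast Nat.pos_of_ne_zero (by omega)
  apply continuousOn_finset_prod
  intro j _
  apply continuousOn_finset_prod
  intro k _
  have hc1 : Continuous fun θ : Fin m → ℝ => 2 * Real.sin (|θ j - θ k| / 2) + 1 / (n:ℝ) := by
    fun_prop
  have hc2 : Continuous fun θ : Fin m → ℝ => 2 * Real.sin (|θ j + θ k| / 2) + 1 / (n:ℝ) := by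
    fun_prop
  apply ContinuousOn.mul
  · refine hc1.continuousOn.rpow_const fun θ hθ => Or.inl (ne_of_gt ?_)
    obtain ⟨hj1, hj2⟩ := hθ j (Set.mem_univ j)
    obtain ⟨hk1, hk2⟩ := hθ k (Set.mem_univ k)
    have : 0 ≤ Real.sin (|θ j - θ k| / 2) := by
      apply Real.sin_nonneg_of_nonneg_of_le_pi (by positivity)
      have : |θ j - θ k| ≤ π := abs_sub_le_iff.mpr ⟨by linarith, by linarith⟩
      linarith [Real.pi_pos]
    positivity
  · refine hc2.continuousOn.rpow_const fun θ hθ => Or.inl (ne_of_gt ?_)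
    obtain ⟨hj1, hj2⟩ := hθ j (Set.mem_univ j)
    obtain ⟨hk1, hk2⟩ := hθ k (Set.mem_univ k)
    have : 0 ≤ Real.sin (|θ j + θ k| / 2) := by
      apply Real.sin_nonneg_of_nonneg_of_le_pi (by positivity)
      rw [abs_of_nonneg (by linarith)]
      linarith
    positivity

section perj
variable {n : ℕ} {α t : ℝ}

private lemma CFK_sin_full (hn : 1 ≤ n) (ht : t ∈ Set.Ioo (1/(2*(n:ℝ))) (1/(n:ℝ))) (p : ℝ) :
    min 1 ((3:ℝ)^p) * (n:ℝ)^(-p) ≤ (2 * Real.sin t + 1/(n:ℝ)) ^ p := by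
  obtain ⟨ht1, ht2⟩ := ht
  have hn0 : (0:ℝ) < n := by exact_mod_cast Nat.pos_of_ne_zero (by omega)
  have hnpi : 1/(n:ℝ) ≤ 1 := by rw [div_le_one hn0]; exact_mod_cast hn
  have h0 : 0 < t := lt_trans (by positivity) ht1
  have hsin0 : 0 ≤ Real.sin t := Real.sin_nonneg_of_nonneg_of_le_pi h0.le
    (by linarith [Real.pi_gt_three])
  have hsinle : Real.sin t ≤ t := Real.sin_le h0.le
  have h2n : (2:ℝ)/n = 1/n + 1/n := by ring
  have h3n : (2:ℝ)/n + 1/n = 3/n := by ring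
  exact CFK_factor_low hn0 (by linarith) (by linarith)

private lemma CFK_sin_half (hn : 1 ≤ n) (ht : t ∈ Set.Ioo (1/(2*(n:ℝ))) (1/(n:ℝ))) (p : ℝ) :
    min 1 ((3:ℝ)^p) * (n:ℝ)^(-p) ≤ (2 * Real.sin (t/2) + 1/(n:ℝ)) ^ p := by
  obtain ⟨ht1, ht2⟩ := ht
  have hn0 : (0:ℝ) < n := by exact_mod_cast Nat.pos_of_ne_zero (by omega)
  have hnpi : 1/(n:ℝ) ≤ 1 := by rw [div_le_one hn0]; exact_mod_cast hn
  have h0 : 0 < t := lt_trans (by positivity) ht1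
  have hsin0 : 0 ≤ Real.sin (t/2) := Real.sin_nonneg_of_nonneg_of_le_pi (by linarith)
    (by linarith [Real.pi_gt_three])
  have hsinle : Real.sin (t/2) ≤ t/2 := Real.sin_le (by linarith)
  have h3n : (2:ℝ)/n + 1/n = 3/n := by ring
  have h2n : (2:ℝ)/n = 1/n + 1/n := by ring
  exact CFK_factor_low hn0 (by linarith) (by linarith)

private lemma CFK_cos_half (hn : 1 ≤ n) (ht : t ∈ Set.Ioo (1/(2*(n:ℝ))) (1/(n:ℝ))) (p : ℝ) :
    min ((2*Real.cos (1/2))^p) ((3:ℝ)^p) ≤ (2 * Real.cos (t/2) + 1/(n:ℝ)) ^ p := by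
  obtain ⟨ht1, ht2⟩ := ht
  have hn0 : (0:ℝ) < n := by exact_mod_cast Nat.pos_of_ne_zero (by omega)
  have hnpi : 1/(n:ℝ) ≤ 1 := by rw [div_le_one hn0]; exact_mod_cast hn
  have h0 : 0 < t := lt_trans (by positivity) ht1
  have hc0 : 0 < Real.cos (1/2) := Real.cos_pos_of_mem_Ioo
    ⟨by linarith [Real.pi_gt_three], by linarith [Real.pi_gt_three]⟩
  have hmono : Real.cos (1/2) ≤ Real.cos (t/2) :=
    Real.cos_le_cos_of_nonneg_of_le_pi (by linarith) (by linarith [Real.pi_gt_three])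
      (by linarith)
  have hcos1 : Real.cos (t/2) ≤ 1 := Real.cos_le_one _
  have hnn : (0:ℝ) < 1/n := by positivity
  exact CFK_rpow_min_le (by linarith) (by linarith) (by linarith)

private lemma CFK_sin_full_pow (hn : 1 ≤ n) (hα : 0 < α)
    (ht : t ∈ Set.Ioo (1/(2*(n:ℝ))) (1/(n:ℝ))) :
    (1/2:ℝ)^(2*α) * (n:ℝ)^(-(2*α)) ≤ (2 * Real.sin t) ^ (2*α) := by
  obtain ⟨ht1, ht2⟩ := ht
  have hn0 : (0:ℝ) < n := by exact_mod_cast Nat.pos_of_ne_zero (by omega)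
  have hnpi : 1/(n:ℝ) ≤ 1 := by rw [div_le_one hn0]; exact_mod_cast hn
  have h0 : 0 < t := lt_trans (by positivity) ht1
  have hsinge : t/2 ≤ Real.sin t := CFK_half_le_sin h0.le (by linarith)
  have h1 : (1:ℝ)/(2*n) ≤ 2 * Real.sin t := by linarith
  have h := Real.rpow_le_rpow (by positivity) h1 (by positivity : (0:ℝ) ≤ 2*α)
  calc (1/2:ℝ)^(2*α) * (n:ℝ)^(-(2*α)) = ((1:ℝ)/(2*n))^(2*α) := by
        rw [show (1:ℝ)/(2*n) = (1/2)*(1/n) by ring,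
          Real.mul_rpow (by norm_num) (by positivity), CFK_one_div_rpow hn0]
    _ ≤ _ := h

private lemma CFK_sin_half_pow (hn : 1 ≤ n) (hα : 0 < α)
    (ht : t ∈ Set.Ioo (1/(2*(n:ℝ))) (1/(n:ℝ))) :
    (1/4:ℝ)^(2*α) * (n:ℝ)^(-(2*α)) ≤ (2 * Real.sin (t/2)) ^ (2*α) := by
  obtain ⟨ht1, ht2⟩ := ht
  have hn0 : (0:ℝ) < n := by exact_mod_cast Nat.pos_of_ne_zero (by omega)
  have hnpi : 1/(n:ℝ) ≤ 1 := by rw [div_le_one hn0]; exact_mod_cast hn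
  have h0 : 0 < t := lt_trans (by positivity) ht1
  have hsinge : (t/2)/2 ≤ Real.sin (t/2) := CFK_half_le_sin (by linarith) (by linarith)
  have h1 : (1:ℝ)/(4*n) ≤ 2 * Real.sin (t/2) := by
    have h4 : (1:ℝ)/(4*n) = (1/(2*n))/2 := by ring
    linarith
  have h := Real.rpow_le_rpow (by positivity) h1 (by positivity : (0:ℝ) ≤ 2*α)
  calc (1/4:ℝ)^(2*α) * (n:ℝ)^(-(2*α)) = ((1:ℝ)/(4*n))^(2*α) := by
        rw [show (1:ℝ)/(4*n) = (1/4)*(1/n) by ring,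
          Real.mul_rpow (by norm_num) (by positivity), CFK_one_div_rpow hn0]
    _ ≤ _ := h

private lemma CFK_cos_half_pow (hn : 1 ≤ n) (hα : 0 < α)
    (ht : t ∈ Set.Ioo (1/(2*(n:ℝ))) (1/(n:ℝ))) :
    (2*Real.cos (1/2)) ^ (2*α) ≤ (2 * Real.cos (t/2)) ^ (2*α) := by
  obtain ⟨ht1, ht2⟩ := ht
  have hn0 : (0:ℝ) < n := by exact_mod_cast Nat.pos_of_ne_zero (by omega)
  have hnpi : 1/(n:ℝ) ≤ 1 := by rw [div_le_one hn0]; exact_mod_cast hn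
  have h0 : 0 < t := lt_trans (by positivity) ht1
  have hc0 : 0 < Real.cos (1/2) := Real.cos_pos_of_mem_Ioo
    ⟨by linarith [Real.pi_gt_three], by linarith [Real.pi_gt_three]⟩
  have hmono : Real.cos (1/2) ≤ Real.cos (t/2) :=
    Real.cos_le_cos_of_nonneg_of_le_pi (by linarith) (by linarith [Real.pi_gt_three])
      (by linarith)
  exact Real.rpow_le_rpow (by linarith) (by linarith) (by positivity)

end perj

end CFKhelpers


section CFKfamilies

private lemma CFK_final {m : ℕ} {n : ℕ} (hn : 1 ≤ n)
    (f : (Fin m → ℝ) → ℝ) {K1 K2 : ℝ} (p q : ℝ)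
    (hcont : ContinuousOn f (Set.univ.pi fun _ : Fin m => Set.Icc (0:ℝ) π))
    (hpos : ∀ θ ∈ cube m 0 π, 0 ≤ f θ)
    (hlow : ∀ θ ∈ cube m (1/(2*(n:ℝ))) (1/(n:ℝ)),
      (K1 * (n:ℝ)^p) ^ (m*(m-1)) * (K2 * (n:ℝ)^q) ^ m ≤ f θ) :
    ((1/π)^m * (K1 ^ (m*(m-1)) * K2 ^ m * (1/2:ℝ)^m)) * (n:ℝ) ^ (p * ((m*(m-1) : ℕ) : ℝ) + q * m - m)
      ≤ (1/π)^m * ∫ θ in cube m 0 (1/(n:ℝ)), f θ ∧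
    ((1/π)^m * (K1 ^ (m*(m-1)) * K2 ^ m * (1/2:ℝ)^m)) * (n:ℝ) ^ (p * ((m*(m-1) : ℕ) : ℝ) + q * m - m)
      ≤ (1/π)^m * ∫ θ in cube m 0 π, f θ := by
  have hn0 : (0:ℝ) < n := by exact_mod_cast Nat.pos_of_ne_zero (by omega)
  obtain ⟨h1, h2⟩ := CFK_master f hn hcont hpos hlow
  have hπm : (0:ℝ) ≤ (1/π)^m := by positivity
  have he := CFK_arith_eq hn0 m (m*(m-1)) K1 K2 p q
  exact ⟨by rw [← he]; exact mul_le_mul_of_nonneg_left h1 hπm,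
    by rw [← he]; exact mul_le_mul_of_nonneg_left h2 hπm⟩

private lemma CFK_combine {m n : ℕ} (hn : 1 ≤ n) (α : ℝ) {K2 q : ℝ} (hK2 : 0 < K2)
    (g : ℝ → ℝ) (hg : ∀ t ∈ Set.Ioo (1/(2*(n:ℝ))) (1/(n:ℝ)), K2 * (n:ℝ)^q ≤ g t)
    (θ : Fin m → ℝ) (hθ : θ ∈ cube m (1/(2*(n:ℝ))) (1/(n:ℝ))) :
    (min 1 ((3:ℝ)^(-(2*α^2))) * (n:ℝ)^(2*α^2)) ^ (m*(m-1)) * (K2 * (n:ℝ)^q) ^ m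
      ≤ Fn m n α θ * ∏ j, g (θ j) := by
  have hn0 : (0:ℝ) < n := by exact_mod_cast Nat.pos_of_ne_zero (by omega)
  have hθj : ∀ j, θ j ∈ Set.Ioo (1/(2*(n:ℝ))) (1/(n:ℝ)) := fun j => hθ j (Set.mem_univ j)
  have hFn := CFK_Fn_low hn α θ hθj
  have hK1 : (0:ℝ) < min 1 ((3:ℝ)^(-(2*α^2))) * (n:ℝ)^(2*α^2) :=
    mul_pos (lt_min one_pos (Real.rpow_pos_of_pos (by norm_num) _))
      (Real.rpow_pos_of_pos hn0 _)
  have hK2n : (0:ℝ) < K2 * (n:ℝ)^q := mul_pos hK2 (Real.rpow_pos_of_pos hn0 _)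
  have hprod : (K2 * (n:ℝ)^q) ^ m ≤ ∏ j, g (θ j) := by
    calc (K2 * (n:ℝ)^q) ^ m = ∏ _j : Fin m, (K2 * (n:ℝ)^q) := by
          simp [Finset.prod_const]
      _ ≤ ∏ j, g (θ j) := Finset.prod_le_prod (fun j _ => hK2n.le)
          (fun j _ => hg (θ j) (hθj j))
  exact mul_le_mul hFn hprod (pow_nonneg hK2n.le _) (le_trans (pow_nonneg hK1.le _) hFn)

private lemma CFK_sin_mem {t : ℝ} (ht : t ∈ Set.Ioo 0 π) : 0 ≤ Real.sin t :=
  Real.sin_nonneg_of_nonneg_of_le_pi ht.1.le ht.2.le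

private lemma CFK_sinh_mem {t : ℝ} (ht : t ∈ Set.Ioo 0 π) : 0 ≤ Real.sin (t/2) :=
  Real.sin_nonneg_of_nonneg_of_le_pi (by linarith [ht.1]) (by linarith [ht.2, Real.pi_pos])

private lemma CFK_cosh_mem {t : ℝ} (ht : t ∈ Set.Ioo 0 π) : 0 ≤ Real.cos (t/2) :=
  Real.cos_nonneg_of_mem_Icc ⟨by linarith [ht.1, Real.pi_pos], by linarith [ht.2]⟩

private lemma CFK_sin_memI {t : ℝ} (ht : t ∈ Set.Icc 0 π) : 0 ≤ Real.sin t :=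
  Real.sin_nonneg_of_nonneg_of_le_pi ht.1 ht.2

private lemma CFK_sinh_memI {t : ℝ} (ht : t ∈ Set.Icc 0 π) : 0 ≤ Real.sin (t/2) :=
  Real.sin_nonneg_of_nonneg_of_le_pi (by linarith [ht.1]) (by linarith [ht.2, Real.pi_pos])

private lemma CFK_cosh_memI {t : ℝ} (ht : t ∈ Set.Icc 0 π) : 0 ≤ Real.cos (t/2) :=
  Real.cos_nonneg_of_mem_Icc ⟨by linarith [ht.1, Real.pi_pos], by linarith [ht.2]⟩

end CFKfamilies

/-- **Lower bound (equation (1.12)).** -/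
theorem I_lower_bound (m : ℕ) (hm : 1 ≤ m) (α : ℝ) (hα0 : 0 < α) :
    ∃ c : ℝ, 0 < c ∧ ∀ n : ℕ, 1 ≤ n →
      (c * (n : ℝ) ^ (2 * m * ((m : ℝ) - 1) * α ^ 2 - m * (1 - α ^ 2 + α)) ≤ ISOeven m n α (cube m 0 (1 / n)) ∧
        c * (n : ℝ) ^ (2 * m * ((m : ℝ) - 1) * α ^ 2 - m * (1 - α ^ 2 + α)) ≤ ISOeven m n α (cube m 0 π)) ∧
      (c * (n : ℝ) ^ (2 * m * ((m : ℝ) - 1) * α ^ 2 - m * (1 - α ^ 2 + α)) ≤ ISOminusEven m n α (cube m 0 (1 / n)) ∧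
        c * (n : ℝ) ^ (2 * m * ((m : ℝ) - 1) * α ^ 2 - m * (1 - α ^ 2 + α)) ≤ ISOminusEven m n α (cube m 0 π)) ∧
      (c * (n : ℝ) ^ (2 * m * ((m : ℝ) - 1) * α ^ 2 - m * (1 - α ^ 2 + α)) ≤ ISOodd m n α (cube m 0 (1 / n)) ∧
        c * (n : ℝ) ^ (2 * m * ((m : ℝ) - 1) * α ^ 2 - m * (1 - α ^ 2 + α)) ≤ ISOodd m n α (cube m 0 π)) ∧
      (c * (n : ℝ) ^ (2 * m * ((m : ℝ) - 1) * α ^ 2 - m * (1 - α ^ 2 + α)) ≤ ISOminusOdd m n α (cube m 0 (1 / n)) ∧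
        c * (n : ℝ) ^ (2 * m * ((m : ℝ) - 1) * α ^ 2 - m * (1 - α ^ 2 + α)) ≤ ISOminusOdd m n α (cube m 0 π)) ∧
      (c * (n : ℝ) ^ (2 * m * ((m : ℝ) - 1) * α ^ 2 - m * (1 - α ^ 2 - α)) ≤ ISp m n α (cube m 0 (1 / n)) ∧
        c * (n : ℝ) ^ (2 * m * ((m : ℝ) - 1) * α ^ 2 - m * (1 - α ^ 2 - α)) ≤ ISp m n α (cube m 0 π)) := by
  have hc0 : (0:ℝ) < Real.cos (1/2) := Real.cos_pos_of_mem_Ioo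
    ⟨by linarith [Real.pi_gt_three], by linarith [Real.pi_gt_three]⟩
  have hc02 : (0:ℝ) < 2 * Real.cos (1/2) := by linarith
  have m3 : ∀ r : ℝ, (0:ℝ) < min 1 ((3:ℝ)^r) := fun r =>
    lt_min one_pos (Real.rpow_pos_of_pos (by norm_num) r)
  have mC : ∀ r : ℝ, (0:ℝ) < min ((2*Real.cos (1/2))^r) ((3:ℝ)^r) := fun r =>
    lt_min (Real.rpow_pos_of_pos hc02 r) (Real.rpow_pos_of_pos (by norm_num) r)
  set K1 : ℝ := min 1 ((3:ℝ)^(-(2*α^2))) with hK1def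
  set Ka : ℝ := min 1 ((3:ℝ)^(-α^2+α)) with hKadef
  set Ke : ℝ := min 1 ((3:ℝ)^(-α^2-α)) with hKedef
  set Kb : ℝ := min 1 ((3:ℝ)^(-α^2-α)) * (1/2:ℝ)^(2*α) with hKbdef
  set Kc : ℝ := min 1 ((3:ℝ)^(-α^2-α)) * min ((2*Real.cos (1/2))^(-α^2+α)) ((3:ℝ)^(-α^2+α)) *
    (1/4:ℝ)^(2*α) with hKcdef
  set Kd : ℝ := min 1 ((3:ℝ)^(-α^2+α)) * min ((2*Real.cos (1/2))^(-α^2-α)) ((3:ℝ)^(-α^2-α)) *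
    (2*Real.cos (1/2))^(2*α) with hKddef
  have hK1 : 0 < K1 := m3 _
  have hKa : 0 < Ka := m3 _
  have hKb : 0 < Kb := mul_pos (m3 _) (Real.rpow_pos_of_pos (by norm_num) _)
  have hKc : 0 < Kc := mul_pos (mul_pos (m3 _) (mC _)) (Real.rpow_pos_of_pos (by norm_num) _)
  have hKd : 0 < Kd := mul_pos (mul_pos (m3 _) (mC _)) (Real.rpow_pos_of_pos hc02 _)
  have hKe : 0 < Ke := m3 _
  have hCpos : ∀ {K2 : ℝ}, 0 < K2 →
      0 < (1/π)^m * (K1 ^ (m*(m-1)) * K2 ^ m * (1/2:ℝ)^m) := fun h =>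
    mul_pos (by positivity) (mul_pos (mul_pos (pow_pos hK1 _) (pow_pos h _)) (by positivity))
  refine ⟨min ((1/π)^m * (K1 ^ (m*(m-1)) * Ka ^ m * (1/2:ℝ)^m))
      (min ((1/π)^m * (K1 ^ (m*(m-1)) * Kb ^ m * (1/2:ℝ)^m))
      (min ((1/π)^m * (K1 ^ (m*(m-1)) * Kc ^ m * (1/2:ℝ)^m))
      (min ((1/π)^m * (K1 ^ (m*(m-1)) * Kd ^ m * (1/2:ℝ)^m))
        ((1/π)^m * (K1 ^ (m*(m-1)) * Ke ^ m * (1/2:ℝ)^m))))), ?_, ?_⟩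
  · exact lt_min (hCpos hKa) (lt_min (hCpos hKb) (lt_min (hCpos hKc)
      (lt_min (hCpos hKd) (hCpos hKe))))
  intro n hn
  have hn0 : (0:ℝ) < n := by exact_mod_cast Nat.pos_of_ne_zero (by omega)
  have hT1 : 2 * m * ((m:ℝ) - 1) * α^2 - m * (1 - α^2 + α)
      = 2*α^2 * ((m*(m-1) : ℕ) : ℝ) + (α^2-α) * (m:ℝ) - (m:ℝ) := by
    push_cast [Nat.cast_sub hm]; ring
  have hT2 : 2 * m * ((m:ℝ) - 1) * α^2 - m * (1 - α^2 - α)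
      = 2*α^2 * ((m*(m-1) : ℕ) : ℝ) + (α^2+α) * (m:ℝ) - (m:ℝ) := by
    push_cast [Nat.cast_sub hm]; ring
  have hrn1 : (0:ℝ) ≤ (n:ℝ) ^ (2*α^2 * ((m*(m-1) : ℕ) : ℝ) + (α^2-α) * (m:ℝ) - (m:ℝ)) :=
    Real.rpow_nonneg hn0.le _
  have hrn2 : (0:ℝ) ≤ (n:ℝ) ^ (2*α^2 * ((m*(m-1) : ℕ) : ℝ) + (α^2+α) * (m:ℝ) - (m:ℝ)) :=
    Real.rpow_nonneg hn0.le _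
  have h1npos : (0:ℝ) < 1/(n:ℝ) := by positivity
  -- Family SO(2n)
  have hg1 : ∀ t ∈ Set.Ioo (1/(2*(n:ℝ))) (1/(n:ℝ)),
      Ka * (n:ℝ)^(α^2-α) ≤ (2 * Real.sin t + 1/(n:ℝ)) ^ (-α^2+α) := by
    intro t ht
    have h := CFK_sin_full hn ht (-α^2+α)
    rw [hKadef, show α^2-α = -(-α^2+α) by ring]
    exact h
  have hpos1 : ∀ θ ∈ cube m 0 π, 0 ≤ Fn m n α θ *
      ∏ j : Fin m, (2 * Real.sin (θ j) + 1 / (n:ℝ)) ^ (-α ^ 2 + α) := by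
    intro θ hθ
    have hθj : ∀ j, θ j ∈ Set.Ioo 0 π := fun j => hθ j (Set.mem_univ j)
    refine mul_nonneg (CFK_Fn_nonneg α θ hθj) (Finset.prod_nonneg fun j _ => ?_)
    have := CFK_sin_mem (hθj j)
    apply Real.rpow_nonneg; linarith
  have hcont1 : ContinuousOn (fun θ : Fin m → ℝ => Fn m n α θ *
      ∏ j : Fin m, (2 * Real.sin (θ j) + 1 / (n:ℝ)) ^ (-α ^ 2 + α))
      (Set.univ.pi fun _ : Fin m => Set.Icc (0:ℝ) π) := by
    refine (CFK_Fn_contOn m n α hn).mul (continuousOn_finset_prod _ fun j _ => ?_)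
    refine (Continuous.continuousOn (by fun_prop)).rpow_const fun θ hθ => Or.inl (ne_of_gt ?_)
    have := CFK_sin_memI (hθ j (Set.mem_univ j))
    linarith
  obtain ⟨P1a, P1b⟩ := CFK_final hn _ (2*α^2) (α^2-α) hcont1 hpos1
    (fun θ hθ => CFK_combine hn α hKa _ hg1 θ hθ)
  -- Family SO⁻(2n)
  have hg2 : ∀ t ∈ Set.Ioo (1/(2*(n:ℝ))) (1/(n:ℝ)),
      Kb * (n:ℝ)^(α^2-α) ≤
        (2 * Real.sin t + 1/(n:ℝ)) ^ (-α^2-α) * (2 * Real.sin t) ^ (2*α) := by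
    intro t ht
    have ha := CFK_sin_full hn ht (-α^2-α)
    have hb := CFK_sin_full_pow hn hα0 ht
    have h := CFK_mul_low hn0 (m3 _) (by positivity) ha hb
    rw [hKbdef, show α^2-α = -(-α^2-α) + -(2*α) by ring]
    exact h
  have hpos2 : ∀ θ ∈ cube m 0 π, 0 ≤ Fn m n α θ *
      ∏ j : Fin m, ((2 * Real.sin (θ j) + 1 / (n:ℝ)) ^ (-α ^ 2 - α) *
        (2 * Real.sin (θ j)) ^ (2 * α)) := by
    intro θ hθ
    have hθj : ∀ j, θ j ∈ Set.Ioo 0 π := fun j => hθ j (Set.mem_univ j)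
    refine mul_nonneg (CFK_Fn_nonneg α θ hθj) (Finset.prod_nonneg fun j _ => ?_)
    have := CFK_sin_mem (hθj j)
    exact mul_nonneg (Real.rpow_nonneg (by linarith) _) (Real.rpow_nonneg (by linarith) _)
  have hcont2 : ContinuousOn (fun θ : Fin m → ℝ => Fn m n α θ *
      ∏ j : Fin m, ((2 * Real.sin (θ j) + 1 / (n:ℝ)) ^ (-α ^ 2 - α) *
        (2 * Real.sin (θ j)) ^ (2 * α)))
      (Set.univ.pi fun _ : Fin m => Set.Icc (0:ℝ) π) := by
    refine (CFK_Fn_contOn m n α hn).mul (continuousOn_finset_prod _ fun j _ => ?_)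
    refine ContinuousOn.mul ?_ ?_
    · refine (Continuous.continuousOn (by fun_prop)).rpow_const fun θ hθ => Or.inl (ne_of_gt ?_)
      have := CFK_sin_memI (hθ j (Set.mem_univ j))
      linarith
    · exact (Continuous.continuousOn (by fun_prop)).rpow_const fun θ hθ => Or.inr (by linarith)
  obtain ⟨P2a, P2b⟩ := CFK_final hn _ (2*α^2) (α^2-α) hcont2 hpos2
    (fun θ hθ => CFK_combine hn α hKb _ hg2 θ hθ)
  -- Family SO(2n+1)
  have hg3 : ∀ t ∈ Set.Ioo (1/(2*(n:ℝ))) (1/(n:ℝ)),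
      Kc * (n:ℝ)^(α^2-α) ≤ (2 * Real.sin (t/2) + 1/(n:ℝ)) ^ (-α^2-α) *
        (2 * Real.cos (t/2) + 1/(n:ℝ)) ^ (-α^2+α) * (2 * Real.sin (t/2)) ^ (2*α) := by
    intro t ht
    have ha := CFK_sin_half hn ht (-α^2-α)
    have hb : (min ((2*Real.cos (1/2))^(-α^2+α)) ((3:ℝ)^(-α^2+α))) * (n:ℝ)^(0:ℝ)
        ≤ (2 * Real.cos (t/2) + 1/(n:ℝ)) ^ (-α^2+α) := by
      rw [Real.rpow_zero, mul_one]; exact CFK_cos_half hn ht (-α^2+α)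
    have hc := CFK_sin_half_pow hn hα0 ht
    have h := CFK_mul_low hn0 (mul_pos (m3 _) (mC _)) (by positivity)
      (CFK_mul_low hn0 (m3 _) (mC _) ha hb) hc
    rw [hKcdef, show α^2-α = -(-α^2-α) + 0 + -(2*α) by ring]
    exact h
  have hpos3 : ∀ θ ∈ cube m 0 π, 0 ≤ Fn m n α θ *
      ∏ j : Fin m, ((2 * Real.sin (θ j / 2) + 1 / (n:ℝ)) ^ (-α ^ 2 - α) *
        (2 * Real.cos (θ j / 2) + 1 / (n:ℝ)) ^ (-α ^ 2 + α) *
        (2 * Real.sin (θ j / 2)) ^ (2 * α)) := by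
    intro θ hθ
    have hθj : ∀ j, θ j ∈ Set.Ioo 0 π := fun j => hθ j (Set.mem_univ j)
    refine mul_nonneg (CFK_Fn_nonneg α θ hθj) (Finset.prod_nonneg fun j _ => ?_)
    have h1 := CFK_sinh_mem (hθj j)
    have h2 := CFK_cosh_mem (hθj j)
    exact mul_nonneg (mul_nonneg (Real.rpow_nonneg (by linarith) _)
      (Real.rpow_nonneg (by linarith) _)) (Real.rpow_nonneg (by linarith) _)
  have hcont3 : ContinuousOn (fun θ : Fin m → ℝ => Fn m n α θ *
      ∏ j : Fin m, ((2 * Real.sin (θ j / 2) + 1 / (n:ℝ)) ^ (-α ^ 2 - α) *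
        (2 * Real.cos (θ j / 2) + 1 / (n:ℝ)) ^ (-α ^ 2 + α) *
        (2 * Real.sin (θ j / 2)) ^ (2 * α)))
      (Set.univ.pi fun _ : Fin m => Set.Icc (0:ℝ) π) := by
    refine (CFK_Fn_contOn m n α hn).mul (continuousOn_finset_prod _ fun j _ => ?_)
    refine ContinuousOn.mul (ContinuousOn.mul ?_ ?_) ?_
    · refine (Continuous.continuousOn (by fun_prop)).rpow_const fun θ hθ => Or.inl (ne_of_gt ?_)
      have := CFK_sinh_memI (hθ j (Set.mem_univ j))
      linarith
    · refine (Continuous.continuousOn (by fun_prop)).rpow_const fun θ hθ => Or.inl (ne_of_gt ?_)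
      have := CFK_cosh_memI (hθ j (Set.mem_univ j))
      linarith
    · exact (Continuous.continuousOn (by fun_prop)).rpow_const fun θ hθ => Or.inr (by linarith)
  obtain ⟨P3a, P3b⟩ := CFK_final hn _ (2*α^2) (α^2-α) hcont3 hpos3
    (fun θ hθ => CFK_combine hn α hKc _ hg3 θ hθ)
  -- Family SO⁻(2n+1)
  have hg4 : ∀ t ∈ Set.Ioo (1/(2*(n:ℝ))) (1/(n:ℝ)),
      Kd * (n:ℝ)^(α^2-α) ≤ (2 * Real.sin (t/2) + 1/(n:ℝ)) ^ (-α^2+α) *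
        (2 * Real.cos (t/2) + 1/(n:ℝ)) ^ (-α^2-α) * (2 * Real.cos (t/2)) ^ (2*α) := by
    intro t ht
    have ha := CFK_sin_half hn ht (-α^2+α)
    have hb : (min ((2*Real.cos (1/2))^(-α^2-α)) ((3:ℝ)^(-α^2-α))) * (n:ℝ)^(0:ℝ)
        ≤ (2 * Real.cos (t/2) + 1/(n:ℝ)) ^ (-α^2-α) := by
      rw [Real.rpow_zero, mul_one]; exact CFK_cos_half hn ht (-α^2-α)
    have hcp : (2*Real.cos (1/2))^(2*α) * (n:ℝ)^(0:ℝ) ≤ (2 * Real.cos (t/2)) ^ (2*α) := by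
      rw [Real.rpow_zero, mul_one]; exact CFK_cos_half_pow hn hα0 ht
    have h := CFK_mul_low hn0 (mul_pos (m3 _) (mC _)) (Real.rpow_pos_of_pos hc02 _)
      (CFK_mul_low hn0 (m3 _) (mC _) ha hb) hcp
    rw [hKddef, show α^2-α = -(-α^2+α) + 0 + 0 by ring]
    exact h
  have hpos4 : ∀ θ ∈ cube m 0 π, 0 ≤ Fn m n α θ *
      ∏ j : Fin m, ((2 * Real.sin (θ j / 2) + 1 / (n:ℝ)) ^ (-α ^ 2 + α) *
        (2 * Real.cos (θ j / 2) + 1 / (n:ℝ)) ^ (-α ^ 2 - α) *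
        (2 * Real.cos (θ j / 2)) ^ (2 * α)) := by
    intro θ hθ
    have hθj : ∀ j, θ j ∈ Set.Ioo 0 π := fun j => hθ j (Set.mem_univ j)
    refine mul_nonneg (CFK_Fn_nonneg α θ hθj) (Finset.prod_nonneg fun j _ => ?_)
    have h1 := CFK_sinh_mem (hθj j)
    have h2 := CFK_cosh_mem (hθj j)
    exact mul_nonneg (mul_nonneg (Real.rpow_nonneg (by linarith) _)
      (Real.rpow_nonneg (by linarith) _)) (Real.rpow_nonneg (by linarith) _)
  have hcont4 : ContinuousOn (fun θ : Fin m → ℝ => Fn m n α θ *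
      ∏ j : Fin m, ((2 * Real.sin (θ j / 2) + 1 / (n:ℝ)) ^ (-α ^ 2 + α) *
        (2 * Real.cos (θ j / 2) + 1 / (n:ℝ)) ^ (-α ^ 2 - α) *
        (2 * Real.cos (θ j / 2)) ^ (2 * α)))
      (Set.univ.pi fun _ : Fin m => Set.Icc (0:ℝ) π) := by
    refine (CFK_Fn_contOn m n α hn).mul (continuousOn_finset_prod _ fun j _ => ?_)
    refine ContinuousOn.mul (ContinuousOn.mul ?_ ?_) ?_
    · refine (Continuous.continuousOn (by fun_prop)).rpow_const fun θ hθ => Or.inl (ne_of_gt ?_)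
      have := CFK_sinh_memI (hθ j (Set.mem_univ j))
      linarith
    · refine (Continuous.continuousOn (by fun_prop)).rpow_const fun θ hθ => Or.inl (ne_of_gt ?_)
      have := CFK_cosh_memI (hθ j (Set.mem_univ j))
      linarith
    · exact (Continuous.continuousOn (by fun_prop)).rpow_const fun θ hθ => Or.inr (by linarith)
  obtain ⟨P4a, P4b⟩ := CFK_final hn _ (2*α^2) (α^2-α) hcont4 hpos4
    (fun θ hθ => CFK_combine hn α hKd _ hg4 θ hθ)
  -- Family Sp(2n)
  have hg5 : ∀ t ∈ Set.Ioo (1/(2*(n:ℝ))) (1/(n:ℝ)),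
      Ke * (n:ℝ)^(α^2+α) ≤ (2 * Real.sin t + 1/(n:ℝ)) ^ (-α^2-α) := by
    intro t ht
    have h := CFK_sin_full hn ht (-α^2-α)
    rw [hKedef, show α^2+α = -(-α^2-α) by ring]
    exact h
  have hpos5 : ∀ θ ∈ cube m 0 π, 0 ≤ Fn m n α θ *
      ∏ j : Fin m, (2 * Real.sin (θ j) + 1 / (n:ℝ)) ^ (-α ^ 2 - α) := by
    intro θ hθ
    have hθj : ∀ j, θ j ∈ Set.Ioo 0 π := fun j => hθ j (Set.mem_univ j)
    refine mul_nonneg (CFK_Fn_nonneg α θ hθj) (Finset.prod_nonneg fun j _ => ?_)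
    have := CFK_sin_mem (hθj j)
    apply Real.rpow_nonneg; linarith
  have hcont5 : ContinuousOn (fun θ : Fin m → ℝ => Fn m n α θ *
      ∏ j : Fin m, (2 * Real.sin (θ j) + 1 / (n:ℝ)) ^ (-α ^ 2 - α))
      (Set.univ.pi fun _ : Fin m => Set.Icc (0:ℝ) π) := by
    refine (CFK_Fn_contOn m n α hn).mul (continuousOn_finset_prod _ fun j _ => ?_)
    refine (Continuous.continuousOn (by fun_prop)).rpow_const fun θ hθ => Or.inl (ne_of_gt ?_)
    have := CFK_sin_memI (hθ j (Set.mem_univ j))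
    linarith
  obtain ⟨P5a, P5b⟩ := CFK_final hn _ (2*α^2) (α^2+α) hcont5 hpos5
    (fun θ hθ => CFK_combine hn α hKe _ hg5 θ hθ)
  refine ⟨⟨?_, ?_⟩, ⟨?_, ?_⟩, ⟨?_, ?_⟩, ⟨?_, ?_⟩, ⟨?_, ?_⟩⟩
  · simp only [ISOeven]; rw [hT1]
    exact le_trans (mul_le_mul_of_nonneg_right (min_le_left _ _) hrn1) P1a
  · simp only [ISOeven]; rw [hT1]
    exact le_trans (mul_le_mul_of_nonneg_right (min_le_left _ _) hrn1) P1b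
  · simp only [ISOminusEven]; rw [hT1]
    exact le_trans (mul_le_mul_of_nonneg_right
      ((min_le_right _ _).trans (min_le_left _ _)) hrn1) P2a
  · simp only [ISOminusEven]; rw [hT1]
    exact le_trans (mul_le_mul_of_nonneg_right
      ((min_le_right _ _).trans (min_le_left _ _)) hrn1) P2b
  · simp only [ISOodd]; rw [hT1]
    exact le_trans (mul_le_mul_of_nonneg_right
      ((min_le_right _ _).trans ((min_le_right _ _).trans (min_le_left _ _))) hrn1) P3a
  · simp only [ISOodd]; rw [hT1]
    exact le_trans (mul_le_mul_of_nonneg_right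
      ((min_le_right _ _).trans ((min_le_right _ _).trans (min_le_left _ _))) hrn1) P3b
  · simp only [ISOminusOdd]; rw [hT1]
    exact le_trans (mul_le_mul_of_nonneg_right
      ((min_le_right _ _).trans ((min_le_right _ _).trans
        ((min_le_right _ _).trans (min_le_left _ _)))) hrn1) P4a
  · simp only [ISOminusOdd]; rw [hT1]
    exact le_trans (mul_le_mul_of_nonneg_right
      ((min_le_right _ _).trans ((min_le_right _ _).trans
        ((min_le_right _ _).trans (min_le_left _ _)))) hrn1) P4b
  · simp only [ISp]; rw [hT2]
    exact le_trans (mul_le_mul_of_nonneg_right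
      ((min_le_right _ _).trans ((min_le_right _ _).trans
        ((min_le_right _ _).trans (min_le_right _ _)))) hrn2) P5a
  · simp only [ISp]; rw [hT2]
    exact le_trans (mul_le_mul_of_nonneg_right
      ((min_le_right _ _).trans ((min_le_right _ _).trans
        ((min_le_right _ _).trans (min_le_right _ _)))) hrn2) P5b
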